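/- arXiv:2407.03507 — 2 statements merged into one kernel-verified Lean document; each statement's English description precedes it below -/
import Mathlib

section
/- Let μ, η, ρ > 0 and let real sequences (γ_k), (α_k), (β_k), (a_k), (b_k) with α_k ∈ (0,1), b_k, a_k, γ_k > 0 satisfy the relations γ_k = (1/(2ρ))·(1 + β_k(1−α_k)/α_k), α_k = γ_k β_k b_{k+1}² η/(γ_k β_k b_{k+1}² η + 2a_k²), β_k = 1 − γ_k μ η, a_{k+1} = γ_k √(ηρ) b_{k+1}, and b_{k+1} = b_k/√(β_k). Then for every k ≥ 1 the recursion γ_k² − γ_k·(1/(2ρ) − μη γ_{k−1}²) = γ_{k−1}² holds. -/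
/-- Given positive `μ, η, ρ` and sequences `(γ_k), (α_k), (β_k), (a_k), (b_k)`
with `α_k ∈ (0,1)` and `b_k, a_k, γ_k > 0` satisfying the five parameter relations, the
recursion `γ_k² − γ_k·(1/(2ρ) − μη γ_{k−1}²) = γ_{k−1}²` holds for every `k ≥ 1`. -/
theorem stmt11 (μ η ρ : ℝ) (hμ : 0 < μ) (hη : 0 < η) (hρ : 0 < ρ)
    (γ α βs a b : ℕ → ℝ)
    (hα01 : ∀ k, α k ∈ Set.Ioo (0 : ℝ) 1)
    (hbpos : ∀ k, 0 < b k) (hapos : ∀ k, 0 < a k) (hγpos : ∀ k, 0 < γ k)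
    (h1 : ∀ k, γ k = 1 / (2 * ρ) * (1 + βs k * (1 - α k) / α k))
    (h2 : ∀ k, α k =
      γ k * βs k * (b (k + 1)) ^ 2 * η / (γ k * βs k * (b (k + 1)) ^ 2 * η + 2 * (a k) ^ 2))
    (h3 : ∀ k, βs k = 1 - γ k * μ * η)
    (h4 : ∀ k, a (k + 1) = γ k * Real.sqrt (η * ρ) * b (k + 1))
    (h5 : ∀ k, b (k + 1) = b k / Real.sqrt (βs k)) :
    ∀ k : ℕ, 1 ≤ k →
      γ k ^ 2 - γ k * (1 / (2 * ρ) - μ * η * γ (k - 1) ^ 2) = γ (k - 1) ^ 2 := by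
  intro k hk
  obtain ⟨m, rfl⟩ : ∃ m, k = m + 1 := ⟨k - 1, (Nat.succ_pred_eq_of_pos hk).symm⟩
  simp only [Nat.add_sub_cancel]
  set K := m + 1 with hK
  -- positivity of βs K
  have hβpos : ∀ j, 0 < βs j := by
    intro j
    by_contra h
    push_neg at h
    have hs : Real.sqrt (βs j) = 0 := Real.sqrt_eq_zero_of_nonpos h
    have := hbpos (j + 1)
    rw [h5 j, hs, div_zero] at this
    exact lt_irrefl 0 this
  -- squares
  have hb2 : b (K + 1) ^ 2 = b K ^ 2 / βs K := by
    rw [h5 K, div_pow, Real.sq_sqrt (hβpos K).le]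
  have ha2 : a K ^ 2 = γ m ^ 2 * (η * ρ) * b K ^ 2 := by
    have : a K = γ m * Real.sqrt (η * ρ) * b K := h4 m
    rw [this, mul_pow, mul_pow, Real.sq_sqrt (by positivity : (0:ℝ) ≤ η * ρ)]
  -- abbreviations
  set A := γ K * βs K * (b (K + 1)) ^ 2 * η with hA
  set B := 2 * (a K) ^ 2 with hB
  have hApos : 0 < A := by
    have := hβpos K
    have := hγpos K
    have := hbpos (K + 1)
    positivity
  have hBpos : 0 < B := by have := hapos K; positivity
  have hαK : α K = A / (A + B) := h2 K
  have hαpos := (hα01 K).1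
  have hratio : βs K * (1 - α K) / α K = βs K * B / A := by
    rw [hαK]
    field_simp
    ring
  have hAval : A = γ K * b K ^ 2 * η := by
    rw [hA, hb2]; field_simp [(hβpos K).ne']
  have hBval : B = 2 * (γ m ^ 2 * (η * ρ) * b K ^ 2) := by rw [hB, ha2]
  have key : γ K = 1 / (2 * ρ) * (1 + βs K * B / A) := by
    rw [← hratio]; exact h1 K
  rw [hAval, hBval] at key
  have hβK := hβpos K
  have hγK := hγpos K
  have hbK := hbpos K
  have key2 : γ K ^ 2 * (2 * ρ) = γ K + 2 * ρ * γ m ^ 2 * βs K := by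
    have hne : βs K * b K ^ 2 * η ≠ 0 := by positivity
    apply mul_right_cancel₀ hne
    field_simp at key
    linear_combination (βs K * b K ^ 2 * η) * key
  rw [h3 K] at key2
  have h2ρ : (2 * ρ) ≠ 0 := by positivity
  field_simp
  linear_combination key2
end

section
/- Let e be uniformly distributed on the unit Euclidean sphere S^{d−1} ⊂ ℝ^d, let r be a random variable with values in [−1,1] independent of e, let K: [−1,1] → ℝ be measurable with E[rK(r)] = 1 and E[r^j K(r)] = 0 for j = 2, …, l, and let f: ℝ^d → ℝ be l times differentiable at x. Then for every h > 0: E[(d/h)·(⟨∇f(x), h r e⟩ + Σ_{2 ≤ |n| ≤ l} ((r h)^{|n|}/n!) D^n f(x) e^n)·K(r)·e] = ∇f(x), where the sum is over multi-indices n ∈ ℕ^d with 2 ≤ |n| ≤ l and D^n f(x) e^n denotes the corresponding partial derivative applied to powers of the coordinates of e. In particular this uses E[e eᵀ] = (1/d)·I_{d×d}. -/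
set_option linter.unusedSectionVars false



open MeasureTheory ProbabilityTheory
open scoped RealInnerProductSpace

/-- The uniform (normalized surface) probability measure on the unit Euclidean sphere
`S^{d−1} ⊂ ℝ^d`, realized as the normalized `(d−1)`-dimensional Hausdorff measure
restricted to the sphere. -/
noncomputable def sphereUniform (d : ℕ) : Measure (EuclideanSpace ℝ (Fin d)) :=
  (μH[(d : ℝ) - 1] (Metric.sphere (0 : EuclideanSpace ℝ (Fin d)) 1))⁻¹ •
    (μH[(d : ℝ) - 1] : Measure (EuclideanSpace ℝ (Fin d))).restrict
      (Metric.sphere (0 : EuclideanSpace ℝ (Fin d)) 1)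

/-- The partial derivative `∂f/∂x_i` of `f : ℝ^d → ℝ`. -/
noncomputable def pderiv' {d : ℕ} (i : Fin d) (f : EuclideanSpace ℝ (Fin d) → ℝ) :
    EuclideanSpace ℝ (Fin d) → ℝ :=
  fun x => fderiv ℝ f x (EuclideanSpace.single i 1)

/-- The iterated partial derivative `D^n f = ∂^{|n|} f/∂x₁^{n₁}⋯∂x_d^{n_d}` attached to a
multi-index `n : Fin d → ℕ`. -/
noncomputable def Dmulti {d : ℕ} (n : Fin d → ℕ) (f : EuclideanSpace ℝ (Fin d) → ℝ) :
    EuclideanSpace ℝ (Fin d) → ℝ :=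
  (List.finRange d).foldr (fun i g => (pderiv' i)^[n i] g) f

lemma map_sphereUniform {d : ℕ} (T : EuclideanSpace ℝ (Fin d) ≃ₗᵢ[ℝ] EuclideanSpace ℝ (Fin d)) :
    Measure.map T (sphereUniform d) = sphereUniform d := by
  unfold sphereUniform
  rw [Measure.map_smul]
  congr 1
  have hpre : Metric.sphere (0 : EuclideanSpace ℝ (Fin d)) 1
      = T ⁻¹' (Metric.sphere (0 : EuclideanSpace ℝ (Fin d)) 1) := by
    ext y
    simp [mem_sphere_iff_norm, T.norm_map]
  conv_lhs => rw [hpre]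
  rw [← Measure.restrict_map (show Measurable T from T.toIsometryEquiv.continuous.measurable) Metric.isClosed_sphere.measurableSet,
    show (⇑T : EuclideanSpace ℝ (Fin d) → EuclideanSpace ℝ (Fin d)) = ⇑T.toIsometryEquiv from rfl,
    T.toIsometryEquiv.map_hausdorffMeasure]

lemma sphere_ae {d : ℕ} : ∀ᵐ y ∂(sphereUniform d), ‖y‖ = 1 := by
  rw [ae_iff]
  have : {y : EuclideanSpace ℝ (Fin d) | ¬ ‖y‖ = 1} = (Metric.sphere 0 1)ᶜ := by
    ext y; simp [mem_sphere_iff_norm]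
  rw [this]
  unfold sphereUniform
  rw [Measure.smul_apply, Measure.restrict_apply (Metric.isClosed_sphere.measurableSet.compl)]
  simp

section
variable {d : ℕ}

noncomputable def negT (j : Fin d) :
    EuclideanSpace ℝ (Fin d) ≃ₗᵢ[ℝ] EuclideanSpace ℝ (Fin d) :=
  LinearIsometryEquiv.piLpCongrRight 2
    (fun k => if k = j then LinearIsometryEquiv.neg ℝ else LinearIsometryEquiv.refl ℝ ℝ)

lemma negT_apply (j : Fin d) (y : EuclideanSpace ℝ (Fin d)) (k : Fin d) :
    negT j y k = if k = j then -y k else y k := by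
  rw [negT, LinearIsometryEquiv.piLpCongrRight_apply]
  by_cases hk : k = j
  · subst hk; simp
  · simp [hk]

noncomputable def swapT (i j : Fin d) :
    EuclideanSpace ℝ (Fin d) ≃ₗᵢ[ℝ] EuclideanSpace ℝ (Fin d) :=
  LinearIsometryEquiv.piLpCongrLeft 2 ℝ ℝ (Equiv.swap i j)

lemma swapT_apply (i j : Fin d) (y : EuclideanSpace ℝ (Fin d)) (k : Fin d) :
    swapT i j y k = y (Equiv.swap i j k) := by
  rw [swapT, LinearIsometryEquiv.piLpCongrLeft_apply]
  simp [Equiv.piCongrLeft'_apply, Equiv.symm_swap]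

lemma swapT_apply_left (i j : Fin d) (y : EuclideanSpace ℝ (Fin d)) :
    swapT i j y i = y j := by rw [swapT_apply, Equiv.swap_apply_left]

lemma negT_apply_self (j : Fin d) (y : EuclideanSpace ℝ (Fin d)) :
    negT j y j = -y j := by rw [negT_apply, if_pos rfl]

lemma negT_apply_ne {k j : Fin d} (hk : k ≠ j) (y : EuclideanSpace ℝ (Fin d)) :
    negT j y k = y k := by rw [negT_apply, if_neg hk]

lemma abs_coord_le (y : EuclideanSpace ℝ (Fin d)) (i : Fin d) : |y i| ≤ ‖y‖ := by
  rw [EuclideanSpace.norm_eq, ← Real.sqrt_sq_eq_abs]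
  refine Real.sqrt_le_sqrt ?_
  have := Finset.single_le_sum (f := fun k => ‖y k‖ ^ 2)
    (fun k _ => sq_nonneg _) (Finset.mem_univ i)
  simpa [Real.norm_eq_abs, sq_abs] using this

end

lemma coord_cont {d : ℕ} (i : Fin d) :
    Continuous fun y : EuclideanSpace ℝ (Fin d) => y i :=
  (EuclideanSpace.proj (𝕜 := ℝ) i).continuous

lemma moment_integrable {d : ℕ} [IsFiniteMeasure (sphereUniform d)] (i j : Fin d) :
    Integrable (fun y => y i * y j) (sphereUniform d) := by
  refine Integrable.mono' (integrable_const 1) (((coord_cont i).mul (coord_cont j)).aestronglyMeasurable) ?_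
  filter_upwards [sphere_ae] with y hy
  rw [Real.norm_eq_abs, abs_mul]
  calc |y i| * |y j| ≤ ‖y‖ * ‖y‖ :=
        mul_le_mul (abs_coord_le y i) (abs_coord_le y j) (abs_nonneg _) (norm_nonneg _)
    _ = 1 := by rw [hy]; ring

lemma sphere_moment {d : ℕ} (hd : 0 < d) [IsProbabilityMeasure (sphereUniform d)] (i j : Fin d) :
    ∫ y, y i * y j ∂(sphereUniform d) = if i = j then 1 / (d : ℝ) else 0 := by
  have key : ∀ (T : EuclideanSpace ℝ (Fin d) ≃ₗᵢ[ℝ] EuclideanSpace ℝ (Fin d))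
      (g : EuclideanSpace ℝ (Fin d) → ℝ), Continuous g →
      ∫ y, g y ∂(sphereUniform d) = ∫ y, g (T y) ∂(sphereUniform d) := by
    intro T g hg
    conv_lhs => rw [← map_sphereUniform T]
    rw [show (⇑T : EuclideanSpace ℝ (Fin d) → EuclideanSpace ℝ (Fin d)) = ⇑T.toIsometryEquiv
      from rfl, integral_map (T.toIsometryEquiv.continuous.measurable.aemeasurable)
      hg.aestronglyMeasurable]
  by_cases hij : i = j
  · subst hij
    simp only [if_pos rfl]
    -- all coordinates have the same square integral
    obtain ⟨i0, _⟩ : ∃ i0 : Fin d, True := ⟨⟨0, hd⟩, trivial⟩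
    have hsame : ∀ k : Fin d, ∫ y, y k * y k ∂(sphereUniform d)
        = ∫ y, y i0 * y i0 ∂(sphereUniform d) := by
      intro k
      have := key (swapT k i0) (fun y => y k * y k)
        ((coord_cont k).mul (coord_cont k))
      rw [this]
      simp only [swapT_apply_left]
    have hsum : ∑ k : Fin d, ∫ y, y k * y k ∂(sphereUniform d) = 1 := by
      rw [← integral_finset_sum _ (fun k _ => moment_integrable k k)]
      have hone : ∫ _ : EuclideanSpace ℝ (Fin d), (1 : ℝ) ∂(sphereUniform d) = 1 := by simp
      rw [← hone]
      refine integral_congr_ae ?_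
      filter_upwards [sphere_ae] with y hy
      have : (∑ k : Fin d, y k * y k) = ⟪y, y⟫ := by
        rw [PiLp.inner_apply]; simp [RCLike.inner_apply, mul_comm]
        exact Finset.sum_congr rfl fun _ _ => (sq _).symm
      rw [this, real_inner_self_eq_norm_sq, hy]; norm_num
    rw [hsame i] at *
    rw [Finset.sum_congr rfl (fun k _ => hsame k), Finset.sum_const, Finset.card_univ,
      Fintype.card_fin, nsmul_eq_mul] at hsum
    field_simp at hsum ⊢
    rw [if_pos trivial]; field_simp; linarith [hsum]
  · simp only [if_neg hij]
    have := key (negT j) (fun y => y i * y j) ((coord_cont i).mul (coord_cont j))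
    simp only [negT_apply_self, negT_apply_ne hij] at this
    have h2 : ∫ y, y i * -y j ∂(sphereUniform d) = - ∫ y, y i * y j ∂(sphereUniform d) := by
      rw [← integral_neg]; congr 1; funext y; ring
    rw [h2] at this
    linarith

section OmegaSide
variable {d : ℕ} {Ω : Type} [MeasureSpace Ω] [IsProbabilityMeasure (ℙ : Measure Ω)]
  {e : Ω → EuclideanSpace ℝ (Fin d)} {r : Ω → ℝ}
  (he : Measurable e) (hr : Measurable r)
  (hrval : ∀ ω, r ω ∈ Set.Icc (-1 : ℝ) 1)
  (hindep : IndepFun e r ℙ)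
  {K : ℝ → ℝ} (hK : Measurable K)
  (hKint : Integrable (fun ω => K (r ω)) ℙ)
  (hesph : ∀ᵐ ω ∂ℙ, ‖e ω‖ = 1)

include he hr hrval hindep hK hKint hesph in
lemma term_lemma (φ : ℝ → ℝ) (hφ : Measurable φ) (c : ℝ)
    (hφb : ∀ t ∈ Set.Icc (-1:ℝ) 1, |φ t| ≤ c * |K t|)
    (ψ : EuclideanSpace ℝ (Fin d) → ℝ) (hψ : Continuous ψ) (M : ℝ)
    (hψb : ∀ y : EuclideanSpace ℝ (Fin d), ‖y‖ = 1 → |ψ y| ≤ M) :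
    Integrable (fun ω => (φ (r ω) * ψ (e ω)) • e ω) ℙ ∧
    ∀ i : Fin d, (∫ ω, (φ (r ω) * ψ (e ω)) • e ω ∂ℙ) i
      = (∫ ω, φ (r ω) ∂ℙ) * ∫ ω, ψ (e ω) * e ω i ∂ℙ := by
  have hφr_int : Integrable (fun ω => φ (r ω)) ℙ := by
    refine Integrable.mono' (hKint.abs.const_mul c) ((hφ.comp hr).aestronglyMeasurable) ?_
    exact Filter.Eventually.of_forall fun ω => by
      simpa [Real.norm_eq_abs] using hφb _ (hrval ω)
  -- auxiliary: for a continuous ψ' bounded by M' on sphere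
  have key : ∀ (ψ' : EuclideanSpace ℝ (Fin d) → ℝ), Continuous ψ' →
      ∀ (M' : ℝ), (∀ y : EuclideanSpace ℝ (Fin d), ‖y‖ = 1 → |ψ' y| ≤ M') →
      Integrable (fun ω => ψ' (e ω)) ℙ ∧
      ∫ ω, φ (r ω) * ψ' (e ω) ∂ℙ = (∫ ω, φ (r ω) ∂ℙ) * ∫ ω, ψ' (e ω) ∂ℙ := by
    intro ψ' hψ' M' hψb'
    have hψe_int : Integrable (fun ω => ψ' (e ω)) ℙ := by
      refine Integrable.mono' (integrable_const M')
        ((hψ'.measurable.comp he).aestronglyMeasurable) ?_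
      filter_upwards [hesph] with ω hω
      simpa [Real.norm_eq_abs] using hψb' _ hω
    refine ⟨hψe_int, ?_⟩
    have hind : IndepFun (fun ω => φ (r ω)) (fun ω => ψ' (e ω)) ℙ :=
      hindep.symm.comp hφ hψ'.measurable
    exact hind.integral_fun_mul_eq_mul_integral hφr_int.1 hψe_int.1
  obtain ⟨hψe_int, heq⟩ := key ψ hψ M hψb
  have hvec_int : Integrable (fun ω => (φ (r ω) * ψ (e ω)) • e ω) ℙ := by
    refine Integrable.mono' (((hKint.abs.const_mul c).mul_const M)) ?_ ?_
    · exact ((hφ.comp hr).mul (hψ.measurable.comp he)).aestronglyMeasurable.smul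
        he.aestronglyMeasurable
    · filter_upwards [hesph] with ω hω
      rw [norm_smul, hω, mul_one, Real.norm_eq_abs, abs_mul]
      exact mul_le_mul (hφb _ (hrval ω)) (hψb _ hω) (abs_nonneg _)
        (le_trans (abs_nonneg _) (hφb _ (hrval ω)))
  refine ⟨hvec_int, fun i => ?_⟩
  have hproj := (EuclideanSpace.proj (𝕜 := ℝ) i).integral_comp_comm hvec_int
  have hpa : ∀ v : EuclideanSpace ℝ (Fin d), EuclideanSpace.proj (𝕜 := ℝ) i v = v i := fun _ => rfl
  rw [hpa] at hproj
  rw [← hproj]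
  have hre : ∀ ω, EuclideanSpace.proj (𝕜 := ℝ) i ((φ (r ω) * ψ (e ω)) • e ω)
      = φ (r ω) * (ψ (e ω) * e ω i) := by
    intro ω
    rw [hpa]
    show (φ (r ω) * ψ (e ω)) * e ω i = _
    ring
  rw [integral_congr_ae (Filter.Eventually.of_forall hre)]
  obtain ⟨_, heq2⟩ := key (fun y => ψ y * y i) (hψ.mul (coord_cont i)) M (by
    intro y hy
    rw [abs_mul]
    calc |ψ y| * |y i| ≤ |ψ y| * 1 := by
          refine mul_le_mul_of_nonneg_left ?_ (abs_nonneg _)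
          rw [← hy]; exact abs_coord_le y i
      _ = |ψ y| := mul_one _
      _ ≤ M := hψb y hy)
  exact heq2

include he in
lemma e_norm_ae (hedist : Measure.map e ℙ = sphereUniform d) : ∀ᵐ ω ∂ℙ, ‖e ω‖ = 1 := by
  have h1 : ∀ᵐ y ∂(Measure.map e ℙ), ‖y‖ = 1 := by rw [hedist]; exact sphere_ae
  exact (ae_map_iff he.aemeasurable
    ((isClosed_eq continuous_norm continuous_const).measurableSet)).mp h1

include he in
lemma e_moment (hd : 0 < d) (hedist : Measure.map e ℙ = sphereUniform d) (k i : Fin d) :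
    ∫ ω, e ω k * e ω i ∂ℙ = if k = i then 1 / (d : ℝ) else 0 := by
  have hprob : IsProbabilityMeasure (sphereUniform d) := by
    rw [← hedist]; exact Measure.isProbabilityMeasure_map he.aemeasurable
  have := integral_map (μ := ℙ) he.aemeasurable
    (f := fun y : EuclideanSpace ℝ (Fin d) => y k * y i)
    ((coord_cont k).mul (coord_cont i)).aestronglyMeasurable
  rw [hedist] at this
  rw [← this]
  exact sphere_moment hd k i

end OmegaSide


/-- a kernel property. If `e` is uniform on the unit sphere, `r ∈ [−1,1]` is
independent of `e`, `K` satisfies `E[rK(r)] = 1` and `E[r^j K(r)] = 0` for `j = 2,…,l`, and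
`f` is `l` times differentiable at `x`, then for every `h > 0`,
`E[(d/h)·(⟨∇f(x), h r e⟩ + Σ_{2 ≤ |n| ≤ l} ((r h)^{|n|}/n!) D^n f(x) e^n)·K(r)·e] = ∇f(x)`,
where the inner sum ranges over multi-indices `n` with `|n| = j`. -/
theorem stmt16 {d : ℕ} (hd : 0 < d) (l : ℕ)
    {Ω : Type} [MeasureSpace Ω] [IsProbabilityMeasure (ℙ : Measure Ω)]
    (e : Ω → EuclideanSpace ℝ (Fin d)) (r : Ω → ℝ)
    (he : Measurable e) (hr : Measurable r)
    (hedist : Measure.map e ℙ = sphereUniform d)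
    (hrval : ∀ ω, r ω ∈ Set.Icc (-1 : ℝ) 1)
    (hindep : IndepFun e r ℙ)
    (K : ℝ → ℝ) (hK : Measurable K)
    (hKint : Integrable (fun ω => K (r ω)) ℙ)
    (hK1 : (∫ ω, r ω * K (r ω) ∂ℙ) = 1)
    (hKj : ∀ j, 2 ≤ j → j ≤ l → (∫ ω, (r ω) ^ j * K (r ω) ∂ℙ) = 0)
    (f : EuclideanSpace ℝ (Fin d) → ℝ)
    (f' : EuclideanSpace ℝ (Fin d) → EuclideanSpace ℝ (Fin d))
    (x : EuclideanSpace ℝ (Fin d))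
    (hf : ContDiffAt ℝ l f x) (hgrad : HasGradientAt f (f' x) x)
    (h : ℝ) (hh : 0 < h) :
    (∫ ω, (((d : ℝ) / h) *
        ((⟪f' x, (h * r ω) • e ω⟫ +
          ∑ j ∈ Finset.Icc 2 l, ∑ n ∈ Finset.Nat.antidiagonalTuple d j,
            ((r ω * h) ^ j / ∏ i, ((n i).factorial : ℝ)) * Dmulti n f x *
              ∏ i, (e ω i) ^ (n i)) * K (r ω))) • e ω ∂ℙ) = f' x := by
  have hdR : ((d : ℝ)) ≠ 0 := Nat.cast_ne_zero.mpr hd.ne'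
  have hh0 : h ≠ 0 := hh.ne'
  have hesph : ∀ᵐ ω ∂ℙ, ‖e ω‖ = 1 := e_norm_ae he hedist
  set coef : ℕ → (Fin d → ℕ) → ℝ := fun j n =>
    (d : ℝ) / h * h ^ j * Dmulti n f x / ∏ i, ((n i).factorial : ℝ) with hcoef
  -- pointwise decomposition
  have hdecomp : ∀ ω, (((d : ℝ) / h) *
        ((⟪f' x, (h * r ω) • e ω⟫ +
          ∑ j ∈ Finset.Icc 2 l, ∑ n ∈ Finset.Nat.antidiagonalTuple d j,
            ((r ω * h) ^ j / ∏ i, ((n i).factorial : ℝ)) * Dmulti n f x *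
              ∏ i, (e ω i) ^ (n i)) * K (r ω))) • e ω
      = ((((d : ℝ) * (r ω * K (r ω))) * ⟪f' x, e ω⟫) • e ω)
        + ∑ j ∈ Finset.Icc 2 l, ∑ n ∈ Finset.Nat.antidiagonalTuple d j,
            ((coef j n * ((r ω) ^ j * K (r ω))) * ∏ i, (e ω i) ^ (n i)) • e ω := by
    intro ω
    have hsc : ((d : ℝ) / h) *
        ((⟪f' x, (h * r ω) • e ω⟫ +
          ∑ j ∈ Finset.Icc 2 l, ∑ n ∈ Finset.Nat.antidiagonalTuple d j,
            ((r ω * h) ^ j / ∏ i, ((n i).factorial : ℝ)) * Dmulti n f x *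
              ∏ i, (e ω i) ^ (n i)) * K (r ω))
        = (((d : ℝ) * (r ω * K (r ω))) * ⟪f' x, e ω⟫)
          + ∑ j ∈ Finset.Icc 2 l, ∑ n ∈ Finset.Nat.antidiagonalTuple d j,
              (coef j n * ((r ω) ^ j * K (r ω))) * ∏ i, (e ω i) ^ (n i) := by
      rw [real_inner_smul_right, add_mul, mul_add]
      congr 1
      · field_simp
      · rw [Finset.sum_mul, Finset.mul_sum]
        refine Finset.sum_congr rfl fun j hj => ?_
        rw [Finset.sum_mul, Finset.mul_sum]
        refine Finset.sum_congr rfl fun n hn => ?_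
        rw [hcoef]
        ring
    rw [hsc, add_smul]
    simp only [Finset.sum_smul]
  rw [integral_congr_ae (Filter.Eventually.of_forall hdecomp)]
  -- the main (first-order) term
  have hA := term_lemma he hr hrval hindep hK hKint hesph
    (fun t => (d : ℝ) * (t * K t)) (measurable_const.mul (measurable_id'.mul hK)) (d : ℝ)
    (by
      intro t ht
      rw [abs_mul, abs_mul, Nat.abs_cast]
      have h1 : |t| ≤ 1 := abs_le.mpr ⟨ht.1, ht.2⟩
      have : |t| * |K t| ≤ 1 * |K t| := mul_le_mul_of_nonneg_right h1 (abs_nonneg _)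
      nlinarith [abs_nonneg (K t), Nat.cast_nonneg (α := ℝ) d])
    (fun y => ⟪f' x, y⟫) (Continuous.inner continuous_const continuous_id) ‖f' x‖
    (fun y hy => by
      calc |⟪f' x, y⟫| ≤ ‖f' x‖ * ‖y‖ := abs_real_inner_le_norm _ _
        _ = ‖f' x‖ := by rw [hy, mul_one])
  -- the higher-order terms vanish
  have hB : ∀ j ∈ Finset.Icc 2 l, ∀ n ∈ Finset.Nat.antidiagonalTuple d j,
      Integrable (fun ω => ((coef j n * ((r ω) ^ j * K (r ω))) * ∏ i, (e ω i) ^ (n i)) • e ω) ℙ ∧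
      (∫ ω, ((coef j n * ((r ω) ^ j * K (r ω))) * ∏ i, (e ω i) ^ (n i)) • e ω ∂ℙ) = 0 := by
    intro j hj n hn
    obtain ⟨hj2, hjl⟩ := Finset.mem_Icc.mp hj
    have ht := term_lemma he hr hrval hindep hK hKint hesph
      (fun t => coef j n * (t ^ j * K t))
      (measurable_const.mul ((measurable_id'.pow_const j).mul hK)) |coef j n|
      (by
        intro t ht
        have h1 : |t| ≤ 1 := abs_le.mpr ⟨ht.1, ht.2⟩
        rw [abs_mul, abs_mul, abs_pow]
        have h2 : |t| ^ j ≤ 1 := pow_le_one₀ (abs_nonneg _) h1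
        have : |t| ^ j * |K t| ≤ 1 * |K t| := mul_le_mul_of_nonneg_right h2 (abs_nonneg _)
        rw [one_mul] at this
        exact mul_le_mul_of_nonneg_left this (abs_nonneg _))
      (fun y => ∏ i, (y i) ^ (n i))
      (continuous_finset_prod _ fun i _ => (coord_cont i).pow _) 1
      (by
        intro y hy
        rw [Finset.abs_prod]
        refine Finset.prod_le_one (fun i _ => abs_nonneg _) (fun i _ => ?_)
        rw [abs_pow]
        exact pow_le_one₀ (abs_nonneg _) (hy ▸ abs_coord_le y i))
    refine ⟨ht.1, ?_⟩
    ext i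
    rw [show ((0 : EuclideanSpace ℝ (Fin d)) i) = 0 from rfl]
    rw [ht.2 i, integral_const_mul, hKj j hj2 hjl, mul_zero, zero_mul]
  rw [integral_add hA.1 (integrable_finset_sum _ fun j hj =>
    integrable_finset_sum _ fun n hn => (hB j hj n hn).1)]
  rw [integral_finset_sum _ (fun j hj =>
    integrable_finset_sum _ fun n hn => (hB j hj n hn).1)]
  have hzero : ∑ j ∈ Finset.Icc 2 l,
      ∫ ω, ∑ n ∈ Finset.Nat.antidiagonalTuple d j,
        ((coef j n * ((r ω) ^ j * K (r ω))) * ∏ i, (e ω i) ^ (n i)) • e ω ∂ℙ = 0 := by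
    refine Finset.sum_eq_zero fun j hj => ?_
    rw [integral_finset_sum _ (fun n hn => (hB j hj n hn).1)]
    exact Finset.sum_eq_zero fun n hn => (hB j hj n hn).2
  rw [hzero, add_zero]
  -- compute the first-order term
  ext i
  have hi := hA.2 i
  have hφint : (∫ ω, (d : ℝ) * (r ω * K (r ω)) ∂ℙ) = (d : ℝ) := by
    rw [integral_const_mul, hK1, mul_one]
  -- second factor
  have emom_int : ∀ k : Fin d, Integrable (fun ω => e ω k * e ω i) ℙ := by
    intro k
    refine Integrable.mono' (integrable_const 1)
      (((coord_cont k).measurable.comp he).mul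
        ((coord_cont i).measurable.comp he)).aestronglyMeasurable ?_
    filter_upwards [hesph] with ω hω
    rw [Real.norm_eq_abs, abs_mul]
    calc |e ω k| * |e ω i| ≤ ‖e ω‖ * ‖e ω‖ :=
          mul_le_mul (abs_coord_le _ k) (abs_coord_le _ i) (abs_nonneg _) (norm_nonneg _)
      _ = 1 := by rw [hω]; ring
  have hψint : (∫ ω, ⟪f' x, e ω⟫ * e ω i ∂ℙ) = (f' x) i * (1 / (d : ℝ)) := by
    have hinner : ∀ ω, ⟪f' x, e ω⟫ * e ω i = ∑ k, (f' x) k * (e ω k * e ω i) := by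
      intro ω
      rw [PiLp.inner_apply]
      simp only [RCLike.inner_apply, conj_trivial]
      rw [Finset.sum_mul]
      exact Finset.sum_congr rfl fun k _ => by ring
    rw [integral_congr_ae (Filter.Eventually.of_forall hinner)]
    rw [integral_finset_sum _ (fun k _ => (emom_int k).const_mul _)]
    have : ∀ k : Fin d, (∫ ω, (f' x) k * (e ω k * e ω i) ∂ℙ)
        = if k = i then (f' x) k * (1 / (d : ℝ)) else 0 := by
      intro k
      rw [integral_const_mul, e_moment he hd hedist k i]
      by_cases hk : k = i <;> simp [hk]
    rw [Finset.sum_congr rfl fun k _ => this k, Finset.sum_ite_eq' Finset.univ i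
      (fun k => (f' x) k * (1 / (d : ℝ)))]
    simp
  rw [hi, hφint, hψint]
  field_simp
end
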